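/- arXiv:2106.15961 — 5 statements merged into one kernel-verified Lean document; each statement's English description precedes it below -/
import Mathlib

section
/- Let G be an equilibrium graph in the max-distance network creation game, let a, b be two distinct vertices where a buys an edge (a,a₁). If there exists a shortest path tree T of G rooted at b such that either (a,a₁) is not an edge of T or a₁ is the parent of a in T, then D(a) ≤ D(b) + 1, where D(v) denotes the eccentricity max_u d_G(u,v). -/
/-!
Max-distance network creation game (Demaine et al.):
`n` agents, agent `v` buys edges to the agents in `s v`, each at cost `α`.
The resulting graph has an edge `(u,v)` iff `u ∈ s v` or `v ∈ s u`.
Agent `v`'s cost is `α * |s v|` plus its eccentricity (max distance, `⊤` if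
disconnected). A profile is a (pure Nash) equilibrium if no agent can strictly
decrease its cost by unilaterally changing its edge set.
-/

open SimpleGraph
open scoped ENNReal

namespace NCG

/-- The undirected graph created by strategy profile `s`. -/
def graph (n : ℕ) (s : Fin n → Finset (Fin n)) : SimpleGraph (Fin n) :=
  SimpleGraph.fromRel (fun u v => v ∈ s u)

/-- Eccentricity `D(v) = max_u d_G(v,u)`, valued in `ℕ∞`. -/
noncomputable def ecc {n : ℕ} (G : SimpleGraph (Fin n)) (v : Fin n) : ℕ∞ :=
  ⨆ u, G.edist v u

/-- The cost of agent `v` under profile `s`: `α·|s v| + D(v)` (infinite if the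
graph is disconnected). -/
noncomputable def cost {n : ℕ} (α : ℝ) (s : Fin n → Finset (Fin n)) (v : Fin n) : ℝ≥0∞ :=
  ENNReal.ofReal α * (s v).card + (ecc (graph n s) v : ℝ≥0∞)

/-- Pure Nash equilibrium: no agent can strictly decrease its cost by a
unilateral deviation. -/
def IsEquilibrium {n : ℕ} (α : ℝ) (s : Fin n → Finset (Fin n)) : Prop :=
  ∀ (v : Fin n) (t : Finset (Fin n)), cost α s v ≤ cost α (Function.update s v t) v

/-- Radius `rad(G) = min_v D(v)`. -/
noncomputable def radius {n : ℕ} (G : SimpleGraph (Fin n)) : ℕ∞ :=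
  ⨅ v, ecc G v

/-- Diameter `diam(G) = max_v D(v)`. -/
noncomputable def diam {n : ℕ} (G : SimpleGraph (Fin n)) : ℕ∞ :=
  ⨆ v, ecc G v

/-- Interpret an extended natural number as a real number (`⊤ ↦ 0`). -/
noncomputable def entoR (x : ℕ∞) : ℝ := ((x : ℝ≥0∞)).toReal

/-- `T` is a shortest path tree of `G` rooted at `b`: a spanning tree of `G`
preserving all distances from `b`. -/
def IsSPT {n : ℕ} (G T : SimpleGraph (Fin n)) (b : Fin n) : Prop :=
  T ≤ G ∧ T.IsTree ∧ ∀ v, T.edist b v = G.edist b v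

/-- `p` is the parent of `a` in the tree `T` rooted at `b`. -/
def IsParent {n : ℕ} (T : SimpleGraph (Fin n)) (b a p : Fin n) : Prop :=
  T.Adj a p ∧ T.edist b p + 1 = T.edist b a

/-- The vertex set `B` (with more than two vertices) induces a biconnected
subgraph: removing any single vertex leaves it connected. -/
def IsBiconnected {n : ℕ} (G : SimpleGraph (Fin n)) (B : Finset (Fin n)) : Prop :=
  2 < B.card ∧ ∀ v ∈ B, (G.induce ((B : Set (Fin n)) \ {v})).Connected

/-- `B` is (the vertex set of) a biconnected component of `G`: a maximal
biconnected subgraph with more than two vertices. -/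
def IsBicomp {n : ℕ} (G : SimpleGraph (Fin n)) (B : Finset (Fin n)) : Prop :=
  IsBiconnected G B ∧ ∀ B' : Finset (Fin n), B ⊆ B' → IsBiconnected G B' → B' = B

/-- The induced subgraph of `G` on the vertex set `B`. -/
def Hgraph {n : ℕ} (G : SimpleGraph (Fin n)) (B : Finset (Fin n)) :
    SimpleGraph ((B : Set (Fin n))) :=
  G.induce (B : Set (Fin n))

/-- The degree of `v` inside the induced subgraph on `B`. -/
noncomputable def degH {n : ℕ} (G : SimpleGraph (Fin n)) (B : Finset (Fin n)) (v : Fin n) : ℕ :=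
  {u : Fin n | u ∈ B ∧ G.Adj v u}.ncard

/-- A min cycle: a cycle whose internal (cycle) distances agree with the
distances in `G`, i.e. an isometric cycle. -/
def IsMinCycle {n : ℕ} (G : SimpleGraph (Fin n)) {v : Fin n} (c : G.Walk v v) : Prop :=
  c.IsCycle ∧ ∀ x₁ ∈ c.support, ∀ x₂ ∈ c.support,
    c.toSubgraph.spanningCoe.edist x₁ x₂ = G.edist x₁ x₂

/-- A directed cycle: going around the cycle, each vertex buys the edge to its
successor (in one of the two cyclic orientations). -/
def IsDirectedCycle {n : ℕ} (s : Fin n → Finset (Fin n)) {v : Fin n}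
    (c : (graph n s).Walk v v) : Prop :=
  (∀ d ∈ c.darts, d.toProd.2 ∈ s d.toProd.1) ∨ (∀ d ∈ c.darts, d.toProd.1 ∈ s d.toProd.2)

/-- A shopping vertex of the biconnected component `B` w.r.t. the shortest path
tree `T`: a vertex of `B` buying an edge of the component that is not in `T`. -/
def IsShopping {n : ℕ} (s : Fin n → Finset (Fin n)) (T : SimpleGraph (Fin n))
    (B : Finset (Fin n)) (u : Fin n) : Prop :=
  u ∈ B ∧ ∃ w ∈ B, w ∈ s u ∧ (graph n s).Adj u w ∧ ¬ T.Adj u w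

/-- The social cost of profile `s`. -/
noncomputable def socialCost {n : ℕ} (α : ℝ) (s : Fin n → Finset (Fin n)) : ℝ≥0∞ :=
  ∑ v, cost α s v

end NCG

open NCG

private lemma aux_parent {V : Type*} {T : SimpleGraph V} {b u : V} (hub : u ≠ b)
    (hne : T.edist b u ≠ ⊤) :
    ∃ (p : V) (m : ℕ), T.Adj u p ∧ T.edist b p ≤ (m : ℕ∞) ∧
      T.edist b u = (m : ℕ∞) + 1 := by
  obtain ⟨w, hw⟩ := SimpleGraph.exists_walk_of_edist_ne_top hne
  cases hrev : w.reverse with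
  | nil => exact absurd rfl hub
  | cons hup q =>
    rename_i p
    refine ⟨p, q.length, hup, ?_, ?_⟩
    · rw [SimpleGraph.edist_comm]; exact SimpleGraph.edist_le q
    · have hql : w.length = q.length + 1 := by
        have := congrArg SimpleGraph.Walk.length hrev
        simpa using this
      rw [← hw, hql]; push_cast; ring

/-- the swap lemma `D(a) ≤ D(b) + 1`. -/
theorem swap_lemma (n : ℕ) (α : ℝ) (hα : 0 < α)
    (s : Fin n → Finset (Fin n)) (hs : IsEquilibrium α s)
    (a b a₁ : Fin n) (hab : a ≠ b)
    (hbuy : a₁ ∈ s a) (hadj : (graph n s).Adj a a₁)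
    (hT : ∃ T : SimpleGraph (Fin n), IsSPT (graph n s) T b ∧
      (¬ T.Adj a a₁ ∨ IsParent T b a a₁)) :
    ecc (graph n s) a ≤ ecc (graph n s) b + 1 := by
  classical
  obtain ⟨T, ⟨hTG, hTtree, hTd⟩, hcase⟩ := hT
  set G := graph n s with hG
  set t : Finset (Fin n) := insert b ((s a).erase a₁) with ht
  set s' : Fin n → Finset (Fin n) := Function.update s a t with hs'
  set G' := graph n s' with hG'
  have hTconn : T.Connected := hTtree.isConnected
  have hTfin : ∀ u : Fin n, T.edist b u ≠ ⊤ := fun u =>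
    SimpleGraph.edist_ne_top_iff_reachable.mpr (hTconn.preconnected b u)
  -- edges of G other than {a,a₁} survive in G'
  have hadj' : ∀ u v : Fin n, G.Adj u v → ¬(u = a ∧ v = a₁) → ¬(v = a ∧ u = a₁) →
      G'.Adj u v := by
    intro u v huv h1 h2
    rw [hG, graph, SimpleGraph.fromRel_adj] at huv
    rw [hG', graph, SimpleGraph.fromRel_adj]
    obtain ⟨hne, hmem⟩ := huv
    refine ⟨hne, ?_⟩
    rcases hmem with hm | hm
    · by_cases hu : u = a
      · subst hu
        left
        rw [hs', Function.update_self, ht]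
        exact Finset.mem_insert_of_mem
          (Finset.mem_erase.mpr ⟨fun h => h1 ⟨rfl, h⟩, hm⟩)
      · left; rwa [hs', Function.update_of_ne hu]
    · by_cases hv : v = a
      · subst hv
        right
        rw [hs', Function.update_self, ht]
        exact Finset.mem_insert_of_mem
          (Finset.mem_erase.mpr ⟨fun h => h2 ⟨rfl, h⟩, hm⟩)
      · right; rwa [hs', Function.update_of_ne hv]
  have hab' : G'.Adj a b := by
    rw [hG', graph, SimpleGraph.fromRel_adj]
    refine ⟨hab, Or.inl ?_⟩
    rw [hs', Function.update_self, ht]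
    exact Finset.mem_insert_self _ _
  -- key: distances from b do not increase
  have key : ∀ k : ℕ, ∀ u : Fin n, T.edist b u ≤ (k : ℕ∞) →
      G'.edist b u ≤ T.edist b u := by
    intro k
    induction k with
    | zero =>
      intro u hu
      have h0 : T.edist b u = 0 := le_antisymm (by exact_mod_cast hu) zero_le
      have hub : b = u := SimpleGraph.edist_eq_zero_iff.mp h0
      subst hub
      simp [SimpleGraph.edist_self]
    | succ k ih =>
      intro u hu
      by_cases hub : u = b
      · subst hub; simp [SimpleGraph.edist_self]
      by_cases hua : u = a
      · rw [hua]
        have h1 : G'.edist b a ≤ 1 := by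
          rw [SimpleGraph.edist_comm]
          simpa using SimpleGraph.edist_le hab'.toWalk
        have h2 : (1 : ℕ∞) ≤ T.edist b a :=
          Order.one_le_iff_pos.mpr (SimpleGraph.edist_pos_of_ne (Ne.symm hab))
        exact h1.trans h2
      · have hne : T.edist b u ≠ ⊤ := hTfin u
        obtain ⟨p, m, hup, hbp, hbu⟩ := aux_parent hub hne
        -- the edge (u,p) is not the removed edge {a,a₁}
        have hnotrm : ¬(p = a ∧ u = a₁) := by
          rintro ⟨hpa, hua₁⟩
          rcases hcase with hc | ⟨hTadj, hpar⟩
          · rw [← hpa, ← hua₁] at hc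
            exact (hc hup.symm).elim
          · rw [← hpa, ← hua₁] at hpar
            -- hpar : T.edist b u + 1 = T.edist b p
            have h3 : (m : ℕ∞) + 1 + 1 ≤ (m : ℕ∞) := by
              calc (m : ℕ∞) + 1 + 1 = T.edist b u + 1 := by rw [hbu]
                _ = T.edist b p := hpar
                _ ≤ (m : ℕ∞) := hbp
            exact absurd (by exact_mod_cast h3 : m + 1 + 1 ≤ m) (by omega)
        have hGup : G.Adj u p := hTG hup
        have hG'up : G'.Adj u p :=
          hadj' u p hGup (fun h => hua h.1) hnotrm
        have hmk : m ≤ k := by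
          rw [hbu] at hu
          have h' : m + 1 ≤ k + 1 := by exact_mod_cast hu
          omega
        have hbpk : T.edist b p ≤ (k : ℕ∞) := hbp.trans (by exact_mod_cast hmk)
        have hih := ih p hbpk
        calc G'.edist b u ≤ G'.edist b p + G'.edist p u :=
              SimpleGraph.edist_triangle
          _ ≤ T.edist b p + 1 := by
              refine add_le_add hih ?_
              simpa using SimpleGraph.edist_le hG'up.symm.toWalk
          _ ≤ (m : ℕ∞) + 1 := add_le_add_left hbp 1
          _ = T.edist b u := hbu.symm
  have hkey : ∀ u, G'.edist b u ≤ G.edist b u := by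
    intro u
    rw [← hTd u]
    exact key (T.edist b u).toNat u (le_of_eq (ENat.coe_toNat (hTfin u)).symm)
  -- new eccentricity bound
  have hecc' : ecc G' a ≤ ecc G b + 1 := by
    rw [ecc]
    apply iSup_le
    intro u
    calc G'.edist a u ≤ G'.edist a b + G'.edist b u := SimpleGraph.edist_triangle
      _ ≤ 1 + G.edist b u := by
          refine add_le_add ?_ (hkey u)
          simpa using SimpleGraph.edist_le hab'.toWalk
      _ ≤ 1 + ecc G b := by
          refine add_le_add_right ?_ 1
          exact le_iSup (fun u => G.edist b u) u
      _ = ecc G b + 1 := add_comm _ _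
  -- strategy cardinality bound
  have hcard : t.card ≤ (s a).card := by
    rw [ht]
    have h1 := Finset.card_insert_le b ((s a).erase a₁)
    have h2 : ((s a).erase a₁).card + 1 = (s a).card := Finset.card_erase_add_one hbuy
    omega
  -- equilibrium inequality
  have hcost := hs a t
  rw [cost, cost, Function.update_self] at hcost
  have hX : ENNReal.ofReal α * ((s a).card : ℝ≥0∞) ≠ ⊤ :=
    ENNReal.mul_ne_top ENNReal.ofReal_ne_top (ENNReal.natCast_ne_top _)
  have hmul : ENNReal.ofReal α * (t.card : ℝ≥0∞) ≤
      ENNReal.ofReal α * ((s a).card : ℝ≥0∞) := by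
    refine mul_le_mul_right ?_ _
    exact_mod_cast hcard
  have hchain : ENNReal.ofReal α * ((s a).card : ℝ≥0∞) + (ecc G a : ℝ≥0∞) ≤
      ENNReal.ofReal α * ((s a).card : ℝ≥0∞) + ((ecc G b + 1 : ℕ∞) : ℝ≥0∞) := by
    calc ENNReal.ofReal α * ((s a).card : ℝ≥0∞) + (ecc G a : ℝ≥0∞)
        ≤ ENNReal.ofReal α * (t.card : ℝ≥0∞) + (ecc G' a : ℝ≥0∞) := hcost
      _ ≤ ENNReal.ofReal α * ((s a).card : ℝ≥0∞) + ((ecc G b + 1 : ℕ∞) : ℝ≥0∞) := by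
          refine add_le_add hmul ?_
          exact_mod_cast hecc'
  have hfinal : (ecc G a : ℝ≥0∞) ≤ ((ecc G b + 1 : ℕ∞) : ℝ≥0∞) :=
    (ENNReal.add_le_add_iff_left hX).mp hchain
  exact_mod_cast hfinal
end

section
/- Let G be an equilibrium graph in the max-distance network creation game where vertex a buys two distinct edges (a,a₁) and (a,a₂), and suppose there is a shortest path tree T rooted at a vertex b ≠ a such that (a,a₂) is not an edge of T and either (a,a₁) is not in T or a₁ is the parent of a in T. Then D(a) ≤ D(b) + 1 − α. -/
/-!
Max-distance network creation game (Demaine et al.):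
`n` agents, agent `v` buys edges to the agents in `s v`, each at cost `α`.
The resulting graph has an edge `(u,v)` iff `u ∈ s v` or `v ∈ s u`.
Agent `v`'s cost is `α * |s v|` plus its eccentricity (max distance, `⊤` if
disconnected). A profile is a (pure Nash) equilibrium if no agent can strictly
decrease its cost by unilaterally changing its edge set.
-/

open SimpleGraph
open scoped ENNReal

open NCG

private lemma walk_rev_decomp {V : Type*} {H : SimpleGraph V} {u v : V} (r : H.Walk u v) {k : ℕ}
    (hr : r.length = k + 1) : ∃ w, H.Adj u w ∧ ∃ q : H.Walk w v, q.length = k := by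
  cases r with
  | nil => simp at hr
  | cons h q => exact ⟨_, h, q, by simpa using hr⟩

private lemma exists_adj_edist_succ {V : Type*} {H : SimpleGraph V} {v u : V} {k : ℕ}
    (h : H.edist v u = ((k + 1 : ℕ) : ℕ∞)) : ∃ w, H.Adj w u ∧ H.edist v w ≤ (k : ℕ∞) := by
  obtain ⟨p, hp⟩ := SimpleGraph.exists_walk_of_edist_eq_coe h
  obtain ⟨w, hadj, q, hq⟩ := walk_rev_decomp p.reverse (by simpa using hp)
  refine ⟨w, hadj.symm, ?_⟩
  rw [SimpleGraph.edist_comm]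
  calc H.edist w v ≤ q.length := SimpleGraph.edist_le q
    _ = (k : ℕ∞) := by exact_mod_cast hq


/-- the swap-and-delete lemma `D(a) ≤ D(b) + 1 − α`. -/
theorem swap_delete_lemma (n : ℕ) (α : ℝ) (hα : 0 < α)
    (s : Fin n → Finset (Fin n)) (hs : IsEquilibrium α s)
    (a b a₁ a₂ : Fin n) (hab : a ≠ b) (ha12 : a₁ ≠ a₂)
    (hbuy₁ : a₁ ∈ s a) (hadj₁ : (graph n s).Adj a a₁)
    (hbuy₂ : a₂ ∈ s a) (hadj₂ : (graph n s).Adj a a₂)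
    (hT : ∃ T : SimpleGraph (Fin n), IsSPT (graph n s) T b ∧ ¬ T.Adj a a₂ ∧
      (¬ T.Adj a a₁ ∨ IsParent T b a a₁)) :
    entoR (ecc (graph n s) a) ≤ entoR (ecc (graph n s) b) + 1 - α := by
  classical
  obtain ⟨T, ⟨hTle, hTtree, hTdist⟩, hTa2, hTa1⟩ := hT
  set G := graph n s with hGdef
  -- Step A: finiteness of eccentricities
  have hcost_fin : cost α s a ≠ ⊤ := by
    have h0 := hs a (Finset.univ.erase a)
    have hecc0 : ecc (graph n (Function.update s a (Finset.univ.erase a))) a ≤ 1 := by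
      refine iSup_le fun u => ?_
      by_cases hu : u = a
      · subst hu; simp [SimpleGraph.edist_self]
      · have hadj : (graph n (Function.update s a (Finset.univ.erase a))).Adj a u := by
          simp only [graph, SimpleGraph.fromRel_adj]
          exact ⟨Ne.symm hu, Or.inl (by
            rw [Function.update_self]; exact Finset.mem_erase.mpr ⟨hu, Finset.mem_univ u⟩)⟩
        exact le_of_eq (SimpleGraph.edist_eq_one_iff_adj.mpr hadj)
    refine ne_top_of_le_ne_top ?_ h0
    refine ENNReal.add_ne_top.mpr ⟨ENNReal.mul_ne_top ENNReal.ofReal_ne_top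
      (ENNReal.natCast_ne_top _), ?_⟩
    refine ne_top_of_le_ne_top (by simp : (1 : ℝ≥0∞) ≠ ⊤) ?_
    exact_mod_cast hecc0
  have heccA : (ecc G a : ℝ≥0∞) ≠ ⊤ := by
    refine ne_top_of_le_ne_top hcost_fin ?_
    exact le_add_self
  have heccA' : ecc G a ≠ ⊤ := by
    intro h; rw [h] at heccA; exact heccA ENat.toENNReal_top
  have hedist_ecc : ∀ u, G.edist b u ≤ ecc G b := fun u => le_iSup (fun u => G.edist b u) u
  have heccB' : ecc G b ≠ ⊤ := by
    have hba : G.edist b a ≤ ecc G a := by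
      rw [SimpleGraph.edist_comm]; exact le_iSup (fun u => G.edist a u) b
    have hle : ecc G b ≤ ecc G a + ecc G a := by
      refine iSup_le fun u => ?_
      calc G.edist b u ≤ G.edist b a + G.edist a u := SimpleGraph.edist_triangle
        _ ≤ ecc G a + ecc G a := add_le_add hba (le_iSup (fun u => G.edist a u) u)
    exact ne_top_of_le_ne_top (WithTop.add_ne_top.mpr ⟨heccA', heccA'⟩) hle
  -- Step B: the deviation
  set t : Finset (Fin n) := insert b (((s a).erase a₁).erase a₂) with ht
  set s' := Function.update s a t with hs'
  set G' := graph n s' with hG'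
  have hcard : t.card + 1 ≤ (s a).card := by
    have h2 : a₂ ∈ (s a).erase a₁ := Finset.mem_erase.mpr ⟨ha12.symm, hbuy₂⟩
    have e1 : ((s a).erase a₁).card + 1 = (s a).card := Finset.card_erase_add_one hbuy₁
    have e2 : (((s a).erase a₁).erase a₂).card + 1 = ((s a).erase a₁).card :=
      Finset.card_erase_add_one h2
    have e3 : t.card ≤ (((s a).erase a₁).erase a₂).card + 1 := Finset.card_insert_le _ _
    omega
  have hmem' : ∀ x y : Fin n, y ∈ s x → ¬(x = a ∧ y = a₁) → ¬(x = a ∧ y = a₂) → y ∈ s' x := by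
    intro x y hy h1 h2
    by_cases hx : x = a
    · subst hx
      rw [hs', Function.update_self, ht]
      exact Finset.mem_insert_of_mem (Finset.mem_erase.mpr ⟨fun h => h2 ⟨rfl, h⟩,
        Finset.mem_erase.mpr ⟨fun h => h1 ⟨rfl, h⟩, hy⟩⟩)
    · rwa [hs', Function.update_of_ne hx]
  have hpres : ∀ x y : Fin n, G.Adj x y →
      ¬((x = a ∧ y = a₁) ∨ (y = a ∧ x = a₁) ∨ (x = a ∧ y = a₂) ∨ (y = a ∧ x = a₂)) →
      G'.Adj x y := by
    intro x y hxy hbad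
    rw [hGdef] at hxy
    rw [hG']
    simp only [graph, SimpleGraph.fromRel_adj] at hxy ⊢
    obtain ⟨hne, hm⟩ := hxy
    refine ⟨hne, ?_⟩
    rcases hm with hm | hm
    · exact Or.inl (hmem' x y hm (fun h => hbad (Or.inl h))
        (fun h => hbad (Or.inr (Or.inr (Or.inl h)))))
    · exact Or.inr (hmem' y x hm (fun h => hbad (Or.inr (Or.inl h)))
        (fun h => hbad (Or.inr (Or.inr (Or.inr h)))))
  have hab' : G'.Adj a b := by
    rw [hG']
    simp only [graph, SimpleGraph.fromRel_adj]
    exact ⟨hab, Or.inl (by rw [hs', Function.update_self, ht]; exact Finset.mem_insert_self b _)⟩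
  -- Step B3: distances from b do not increase
  have hkey : ∀ (k : ℕ) (u : Fin n), T.edist b u = (k : ℕ∞) → G'.edist b u ≤ (k : ℕ∞) := by
    intro k
    induction k using Nat.strong_induction_on with
    | _ k ih =>
      intro u hu
      cases k with
      | zero =>
        rw [Nat.cast_zero, SimpleGraph.edist_eq_zero_iff] at hu
        subst hu
        simp [SimpleGraph.edist_self]
      | succ k =>
        obtain ⟨w, hwu, hw⟩ := exists_adj_edist_succ (H := T) hu
        have hwfin : T.edist b w ≠ ⊤ :=
          ne_top_of_le_ne_top (ENat.coe_ne_top k) hw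
        obtain ⟨m, hm⟩ : ∃ m : ℕ, T.edist b w = (m : ℕ∞) := by
          lift T.edist b w to ℕ using hwfin with m hm
          exact ⟨m, rfl⟩
        have hmk : m ≤ k := by
          rw [hm] at hw
          exact_mod_cast hw
        have hGw : G'.edist b w ≤ (m : ℕ∞) := ih m (Nat.lt_succ_of_le hmk) w hm
        by_cases hadj' : G'.Adj w u
        · calc G'.edist b u ≤ G'.edist b w + G'.edist w u := SimpleGraph.edist_triangle
            _ ≤ (m : ℕ∞) + 1 :=
              add_le_add hGw (le_of_eq (SimpleGraph.edist_eq_one_iff_adj.mpr hadj'))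
            _ ≤ ((k + 1 : ℕ) : ℕ∞) := by exact_mod_cast Nat.succ_le_succ hmk
        · have hGadj : G.Adj w u := hTle hwu
          have hbad : (w = a ∧ u = a₁) ∨ (u = a ∧ w = a₁) ∨ (w = a ∧ u = a₂) ∨
              (u = a ∧ w = a₂) := by
            by_contra hc; exact hadj' (hpres w u hGadj hc)
          rcases hbad with ⟨hw', hu'⟩ | ⟨hu', hw'⟩ | ⟨hw', hu'⟩ | ⟨hu', hw'⟩
          · rw [hw', hu'] at hwu
            rw [hw'] at hw
            rw [hu'] at hu
            rcases hTa1 with hno | ⟨hadj1, hpar⟩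
            · exact absurd hwu hno
            · exfalso
              rw [hu] at hpar
              rw [← hpar] at hw
              have hcontra : (k + 1) + 1 ≤ k := by exact_mod_cast hw
              omega
          · rw [hu']
            have h1 : G'.edist b a = 1 := by
              rw [SimpleGraph.edist_comm]
              exact SimpleGraph.edist_eq_one_iff_adj.mpr hab'
            rw [h1]
            exact_mod_cast Nat.succ_le_succ (Nat.zero_le k)
          · rw [hw', hu'] at hwu; exact absurd hwu hTa2
          · rw [hu', hw'] at hwu; exact absurd hwu.symm hTa2
  have hkey' : ∀ u, G'.edist b u ≤ G.edist b u := by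
    intro u
    have hfin : G.edist b u ≠ ⊤ := ne_top_of_le_ne_top heccB' (hedist_ecc u)
    obtain ⟨m, hm⟩ : ∃ m : ℕ, G.edist b u = (m : ℕ∞) := by
      lift G.edist b u to ℕ using hfin with m hm
      exact ⟨m, rfl⟩
    rw [hm]
    exact hkey m u (by rw [hTdist u, hm])
  -- Step B4: eccentricity of a in the new graph
  have heccG' : ecc G' a ≤ ecc G b + 1 := by
    refine iSup_le fun u => ?_
    calc G'.edist a u ≤ G'.edist a b + G'.edist b u := SimpleGraph.edist_triangle
      _ ≤ 1 + G.edist b u :=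
        add_le_add (le_of_eq (SimpleGraph.edist_eq_one_iff_adj.mpr hab')) (hkey' u)
      _ ≤ 1 + ecc G b := add_le_add le_rfl (hedist_ecc u)
      _ = ecc G b + 1 := add_comm _ _
  -- Step C: use the equilibrium condition
  have hEq : ENNReal.ofReal α * (s a).card + (ecc G a : ℝ≥0∞) ≤
      ENNReal.ofReal α * t.card + (ecc G' a : ℝ≥0∞) := by
    have h := hs a t
    simp only [cost, Function.update_self] at h
    exact h
  have h5 : ENNReal.ofReal α * (s a).card + (ecc G a : ℝ≥0∞) ≤
      ENNReal.ofReal α * t.card + ((ecc G b : ℝ≥0∞) + 1) := by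
    refine hEq.trans (add_le_add le_rfl ?_)
    calc (ecc G' a : ℝ≥0∞) ≤ ((ecc G b + 1 : ℕ∞) : ℝ≥0∞) := by exact_mod_cast heccG'
      _ = (ecc G b : ℝ≥0∞) + 1 := by push_cast; ring
  have h6 : ENNReal.ofReal α * t.card + (ENNReal.ofReal α + (ecc G a : ℝ≥0∞)) ≤
      ENNReal.ofReal α * t.card + ((ecc G b : ℝ≥0∞) + 1) := by
    refine le_trans ?_ h5
    have : ENNReal.ofReal α * t.card + (ENNReal.ofReal α + (ecc G a : ℝ≥0∞)) =
        ENNReal.ofReal α * ((t.card : ℝ≥0∞) + 1) + (ecc G a : ℝ≥0∞) := by ring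
    rw [this]
    gcongr
    exact_mod_cast hcard
  have h7 : ENNReal.ofReal α + (ecc G a : ℝ≥0∞) ≤ (ecc G b : ℝ≥0∞) + 1 :=
    (ENNReal.add_le_add_iff_left
      (ENNReal.mul_ne_top ENNReal.ofReal_ne_top (ENNReal.natCast_ne_top _))).mp h6
  have heccB : (ecc G b : ℝ≥0∞) ≠ ⊤ := by
    obtain ⟨m, hm⟩ : ∃ m : ℕ, ecc G b = (m : ℕ∞) := by
      lift ecc G b to ℕ using heccB' with m hm
      exact ⟨m, rfl⟩
    rw [hm]; exact_mod_cast ENat.coe_ne_top m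
  have h8 := ENNReal.toReal_mono (ENNReal.add_ne_top.mpr ⟨heccB, ENNReal.one_ne_top⟩) h7
  rw [ENNReal.toReal_add ENNReal.ofReal_ne_top heccA,
    ENNReal.toReal_add heccB ENNReal.one_ne_top, ENNReal.toReal_ofReal hα.le,
    ENNReal.toReal_one] at h8
  unfold entoR
  linarith
end

section
/- Every equilibrium graph in the max-distance network creation game has no cycle of length less than α + 2. -/
/-!
Max-distance network creation game (Demaine et al.):
`n` agents, agent `v` buys edges to the agents in `s v`, each at cost `α`.
The resulting graph has an edge `(u,v)` iff `u ∈ s v` or `v ∈ s u`.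
Agent `v`'s cost is `α * |s v|` plus its eccentricity (max distance, `⊤` if
disconnected). A profile is a (pure Nash) equilibrium if no agent can strictly
decrease its cost by unilaterally changing its edge set.
-/

open SimpleGraph
open scoped ENNReal

section NoShortCycleAux
open SimpleGraph
variable {V : Type*}

variable {V : Type*}

lemma split_at_first_edge' {G : SimpleGraph V} {u y w : V} (p : G.Walk u y)
    (hnd : p.support.Nodup) (he : s(u, w) ∈ p.edges) :
    ∃ (q : G.Walk w y), p.length = q.length + 1 ∧ s(u, w) ∉ q.edges := by
  cases p with
  | nil => simp at he
  | @cons _ x _ h' q' =>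
    rw [Walk.edges_cons, List.mem_cons] at he
    rw [Walk.support_cons, List.nodup_cons] at hnd
    rcases he with he | he
    · have hxw : x = w := (Sym2.congr_right.mp he.symm)
      subst hxw
      exact ⟨q', by simp, fun hmem => hnd.1 (q'.fst_mem_support_of_mem_edges hmem)⟩
    · exact absurd (q'.fst_mem_support_of_mem_edges he) hnd.1

lemma cycle_detour_walk_at {G : SimpleGraph V} {u w : V} (c : G.Walk u u) (hc : c.IsCycle)
    (he : s(u, w) ∈ c.edges) :
    ∃ q : G.Walk u w, q.length + 1 = c.length ∧ s(u, w) ∉ q.edges := by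
  cases c with
  | nil => simp at he
  | @cons _ x _ h₀ q₀ =>
    have hnodupE : (Walk.cons h₀ q₀).edges.Nodup := hc.edges_nodup
    rw [Walk.edges_cons, List.nodup_cons] at hnodupE
    have hndS : q₀.support.Nodup := by
      have := hc.support_nodup
      rwa [Walk.support_cons, List.tail_cons] at this
    rw [Walk.edges_cons, List.mem_cons] at he
    rcases he with he | he
    · have hxw : x = w := (Sym2.congr_right.mp he.symm)
      subst hxw
      refine ⟨q₀.reverse, by simp, ?_⟩
      rw [Walk.edges_reverse, List.mem_reverse]
      exact fun hmem => hnodupE.1 (he ▸ hmem)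
    · have hne : s(u, w) ≠ s(u, x) := fun hh => hnodupE.1 (hh ▸ he)
      have hrev : s(u, w) ∈ q₀.reverse.edges := by
        rw [Walk.edges_reverse, List.mem_reverse]; exact he
      obtain ⟨q₁, hlen₁, hq₁⟩ := split_at_first_edge' q₀.reverse
        (by rw [Walk.support_reverse]; exact List.nodup_reverse.mpr hndS) hrev
      refine ⟨Walk.cons h₀ q₁.reverse, ?_, ?_⟩
      · rw [Walk.length_cons, Walk.length_cons, Walk.length_reverse]
        rw [Walk.length_reverse] at hlen₁
        omega
      · rw [Walk.edges_cons, List.mem_cons]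
        rintro (hh | hh)
        · exact hne hh
        · rw [Walk.edges_reverse, List.mem_reverse] at hh
          exact hq₁ hh

lemma cycle_detour_walk [DecidableEq V] {G : SimpleGraph V} {u w x : V} (c : G.Walk x x) (hc : c.IsCycle)
    (he : s(u, w) ∈ c.edges) :
    ∃ q : G.Walk u w, q.length + 1 = c.length ∧ s(u, w) ∉ q.edges := by
  have hu : u ∈ c.support := c.fst_mem_support_of_mem_edges he
  have hlen : (c.rotate u hu).length = c.length := by
    rw [← Walk.length_edges, ← Walk.length_edges]
    exact (c.rotate_edges u hu).perm.length_eq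
  obtain ⟨q, hq₁, hq₂⟩ := cycle_detour_walk_at (c.rotate u hu) (hc.rotate hu)
    ((c.rotate_edges u hu).mem_iff.mpr he)
  exact ⟨q, hlen ▸ hq₁, hq₂⟩


variable {V : Type*}

lemma edge_mem_or_eq {G G' : SimpleGraph V} {u w : V}
    (hGG' : ∀ a b, G.Adj a b → G'.Adj a b ∨ s(a, b) = s(u, w)) :
    ∀ e ∈ G.edgeSet, e ∈ G'.edgeSet ∨ e = s(u, w) := by
  intro e
  induction e using Sym2.ind with
  | _ c d => exact fun hcd => hGG' c d hcd

lemma edist_le_detour {G G' : SimpleGraph V} {u w : V} {m : ℕ} (hm : 1 ≤ m)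
    (hGG' : ∀ a b, G.Adj a b → G'.Adj a b ∨ s(a, b) = s(u, w))
    (huw : G'.edist u w ≤ m) {a b : V} (p : G.Walk a b) (hp : p.IsPath) :
    G'.edist a b ≤ (p.length : ℕ∞) + ((m - 1 : ℕ) : ℕ∞) := by
  induction p with
  | nil => simp
  | @cons a x b h q ih =>
    rw [Walk.cons_isPath_iff] at hp
    rcases hGG' a x h with h' | h'
    · have h1 : G'.edist a x ≤ 1 := le_of_eq (edist_eq_one_iff_adj.mpr h')
      calc G'.edist a b ≤ G'.edist a x + G'.edist x b := SimpleGraph.edist_triangle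
        _ ≤ 1 + ((q.length : ℕ∞) + ((m - 1 : ℕ) : ℕ∞)) := add_le_add h1 (ih hp.1)
        _ = ((Walk.cons h q).length : ℕ∞) + ((m - 1 : ℕ) : ℕ∞) := by
            rw [Walk.length_cons]; push_cast; ring
    · have hax : G'.edist a x ≤ (m : ℕ∞) := by
        rcases Sym2.eq_iff.mp h' with ⟨rfl, rfl⟩ | ⟨rfl, rfl⟩
        · exact huw
        · rw [edist_comm]; exact huw
      have hq : ∀ e ∈ q.edges, e ∈ G'.edgeSet := by
        intro e heq
        have hne : e ≠ s(u, w) := by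
          rintro rfl
          rcases Sym2.eq_iff.mp h' with ⟨rfl, rfl⟩ | ⟨rfl, rfl⟩
          · exact hp.2 (q.fst_mem_support_of_mem_edges heq)
          · exact hp.2 (q.snd_mem_support_of_mem_edges heq)
        rcases edge_mem_or_eq hGG' e (q.edges_subset_edgeSet heq) with hh | hh
        · exact hh
        · exact absurd hh hne
      have hxb : G'.edist x b ≤ (q.length : ℕ∞) := by
        have := SimpleGraph.edist_le (q.transfer G' hq)
        rwa [Walk.length_transfer] at this
      calc G'.edist a b ≤ G'.edist a x + G'.edist x b := SimpleGraph.edist_triangle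
        _ ≤ (m : ℕ∞) + (q.length : ℕ∞) := add_le_add hax hxb
        _ = ((m + q.length : ℕ) : ℕ∞) := by push_cast; ring
        _ = ((q.length + 1 + (m - 1) : ℕ) : ℕ∞) := by congr 1; omega
        _ = ((Walk.cons h q).length : ℕ∞) + ((m - 1 : ℕ) : ℕ∞) := by
            rw [Walk.length_cons]; push_cast; ring

lemma edist_le_of_detour [DecidableEq V] {G G' : SimpleGraph V} {u w : V} {m : ℕ} (hm : 1 ≤ m)
    (hGG' : ∀ a b, G.Adj a b → G'.Adj a b ∨ s(a, b) = s(u, w))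
    (huw : G'.edist u w ≤ m) (a b : V) :
    G'.edist a b ≤ G.edist a b + ((m - 1 : ℕ) : ℕ∞) := by
  rcases eq_or_ne (G.edist a b) ⊤ with h | h
  · rw [h, top_add]; exact le_top
  · obtain ⟨p, hp⟩ := exists_walk_of_edist_ne_top h
    calc G'.edist a b ≤ (p.bypass.length : ℕ∞) + ((m - 1 : ℕ) : ℕ∞) :=
          edist_le_detour hm hGG' huw p.bypass p.bypass_isPath
      _ ≤ (p.length : ℕ∞) + ((m - 1 : ℕ) : ℕ∞) :=
          add_le_add_left (Nat.cast_le.mpr p.length_bypass_le) _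
      _ = G.edist a b + ((m - 1 : ℕ) : ℕ∞) := by rw [hp]


end NoShortCycleAux

section NCGAux
open NCG SimpleGraph


lemma graph_adj {n : ℕ} (s : Fin n → Finset (Fin n)) (a b : Fin n) :
    (graph n s).Adj a b ↔ a ≠ b ∧ (b ∈ s a ∨ a ∈ s b) := Iff.rfl

lemma graph_update_eq {n : ℕ} (s : Fin n → Finset (Fin n)) {u w : Fin n}
    (h1 : u ∈ s w) (huw : u ≠ w) :
    graph n (Function.update s u ((s u).erase w)) = graph n s := by
  ext a b
  simp only [graph, fromRel_adj, Function.update_apply, Finset.mem_erase]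
  by_cases ha : a = u <;> by_cases hb : b = u <;> by_cases haw : a = w <;>
    by_cases hbw : b = w <;> subst_vars <;> simp_all

lemma graph_update_adj {n : ℕ} (s : Fin n → Finset (Fin n)) {u w : Fin n}
    (hw : w ∈ s u) (hu : u ∉ s w) (huw : u ≠ w) (a b : Fin n) :
    (graph n (Function.update s u ((s u).erase w))).Adj a b ↔
      (graph n s).Adj a b ∧ s(a, b) ≠ s(u, w) := by
  simp only [graph, fromRel_adj, Function.update_apply, Finset.mem_erase, Sym2.eq_iff]
  by_cases ha : a = u <;> by_cases hb : b = u <;> by_cases haw : a = w <;>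
    by_cases hbw : b = w <;> subst_vars <;> simp_all

lemma ecc_ne_top {n : ℕ} {α : ℝ} {s : Fin n → Finset (Fin n)}
    (hs : IsEquilibrium α s) (u : Fin n) : ecc (graph n s) u ≠ ⊤ := by
  have h := hs u Finset.univ
  have hecc : ecc (graph n (Function.update s u Finset.univ)) u ≤ 1 := by
    refine iSup_le fun x => ?_
    rcases eq_or_ne x u with rfl | hx
    · rw [edist_self]; exact zero_le_one
    · refine le_of_eq (edist_eq_one_iff_adj.mpr ?_)
      refine ⟨hx.symm, Or.inl ?_⟩
      show x ∈ Function.update s u Finset.univ u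
      rw [Function.update_self]
      exact Finset.mem_univ x
  have hfin : cost α (Function.update s u Finset.univ) u < ⊤ := by
    rw [cost]
    refine ENNReal.add_lt_top.mpr ⟨?_, ?_⟩
    · exact ENNReal.mul_lt_top ENNReal.ofReal_lt_top (ENNReal.natCast_lt_top _)
    · calc ((ecc (graph n (Function.update s u Finset.univ)) u : ℕ∞) : ℝ≥0∞)
          ≤ ((1 : ℕ∞) : ℝ≥0∞) := ENat.toENNReal_mono hecc
        _ < ⊤ := by simp
  have hle : (ecc (graph n s) u : ℝ≥0∞) ≤ cost α s u := le_add_self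
  intro htop
  rw [htop] at hle
  simp only [ENat.toENNReal_top, top_le_iff] at hle
  exact absurd (lt_of_le_of_lt (hle ▸ h) hfin) (lt_irrefl _)


end NCGAux

open NCG
/-- every equilibrium graph has no cycle of length less than `α + 2`. -/
theorem no_short_cycle (n : ℕ) (α : ℝ) (hα : 0 < α)
    (s : Fin n → Finset (Fin n)) (hs : IsEquilibrium α s) :
    ∀ (v : Fin n) (c : (graph n s).Walk v v), c.IsCycle → ¬ ((c.length : ℝ) < α + 2) := by
  classical
  intro v c hc hlt
  have hL3 : 3 ≤ c.length := hc.three_le_length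
  have hne : c.edges ≠ [] := by
    intro h
    have h2 := c.length_edges
    rw [h] at h2
    simp at h2
    omega
  obtain ⟨e, he⟩ := List.exists_mem_of_ne_nil _ hne
  have key : ∀ u w : Fin n, s(u, w) ∈ c.edges → w ∈ s u → False := by
    intro u w he hbuy
    have hadj : (graph n s).Adj u w := c.adj_of_mem_edges he
    have huw : u ≠ w := hadj.ne
    by_cases hub : u ∈ s w
    · -- both ends buy the edge: dropping it keeps the graph unchanged
      have hgeq := graph_update_eq s hub huw
      have h := hs u ((s u).erase w)
      rw [cost, cost, Function.update_self, hgeq] at h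
      have hErase : ((s u).erase w).card = (s u).card - 1 := Finset.card_erase_of_mem hbuy
      have hcard : 1 ≤ (s u).card := Finset.card_pos.mpr ⟨w, hbuy⟩
      have hEtop : (ecc (graph n s) u : ℝ≥0∞) ≠ ⊤ := by
        have h1 : ecc (graph n s) u < ⊤ := lt_top_iff_ne_top.mpr (ecc_ne_top hs u)
        have h2 : (ecc (graph n s) u : ℝ≥0∞) < ((⊤ : ℕ∞) : ℝ≥0∞) := by
          exact_mod_cast ENat.toENNReal_strictMono h1
        rw [ENat.toENNReal_top] at h2
        exact h2.ne
      rw [ENNReal.add_le_add_iff_right hEtop] at h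
      have hA : 0 < ENNReal.ofReal α := ENNReal.ofReal_pos.mpr hα
      have hlt' : (((s u).erase w).card : ℝ≥0∞) < ((s u).card : ℝ≥0∞) := by
        exact_mod_cast (by omega : ((s u).erase w).card < (s u).card)
      exact absurd h (not_le.mpr ((ENNReal.mul_lt_mul_iff_right hA.ne' ENNReal.ofReal_ne_top).mpr hlt'))
    · -- only u buys the edge: dropping it deletes the edge
      set s' := Function.update s u ((s u).erase w) with hs'
      have hGadj := graph_update_adj s hbuy hub huw
      obtain ⟨q, hqlen, hqe⟩ := cycle_detour_walk c hc he
      have hq' : ∀ e ∈ q.edges, e ∈ (graph n s').edgeSet := by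
        intro e heq
        have heG : e ∈ (graph n s).edgeSet := q.edges_subset_edgeSet heq
        have hene : e ≠ s(u, w) := fun hh => hqe (hh ▸ heq)
        revert heG hene
        induction e using Sym2.ind with
        | _ a b =>
          intro heG hene
          rw [mem_edgeSet] at heG ⊢
          exact (hGadj a b).mpr ⟨heG, hene⟩
      have hdist : (graph n s').edist u w ≤ ((c.length - 1 : ℕ) : ℕ∞) := by
        have h1 := SimpleGraph.edist_le (q.transfer _ hq')
        rw [Walk.length_transfer] at h1
        exact h1.trans (Nat.cast_le.mpr (by omega))
      have hGG' : ∀ a b, (graph n s).Adj a b → (graph n s').Adj a b ∨ s(a, b) = s(u, w) := by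
        intro a b hab
        by_cases hh : s(a, b) = s(u, w)
        · exact Or.inr hh
        · exact Or.inl ((hGadj a b).mpr ⟨hab, hh⟩)
      have hm1 : 1 ≤ c.length - 1 := by omega
      have hdetour := edist_le_of_detour hm1 hGG' hdist
      have hecc : ecc (graph n s') u ≤ ecc (graph n s) u + ((c.length - 2 : ℕ) : ℕ∞) := by
        refine iSup_le fun x => ?_
        have h1 := hdetour u x
        have h2 : ((c.length - 1 - 1 : ℕ) : ℕ∞) = ((c.length - 2 : ℕ) : ℕ∞) := by norm_cast
        rw [h2] at h1
        exact h1.trans (add_le_add_left (le_iSup (fun y => (graph n s).edist u y) x) _)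
      have h := hs u ((s u).erase w)
      rw [cost, cost, Function.update_self] at h
      set A := ENNReal.ofReal α with hA
      set E := ecc (graph n s) u with hE
      have hEtop : (E : ℝ≥0∞) ≠ ⊤ := by
        have h1 : E < ⊤ := lt_top_iff_ne_top.mpr (ecc_ne_top hs u)
        have h2 : (E : ℝ≥0∞) < ((⊤ : ℕ∞) : ℝ≥0∞) := by
          exact_mod_cast ENat.toENNReal_strictMono h1
        rw [ENat.toENNReal_top] at h2
        exact h2.ne
      have hcard : 1 ≤ (s u).card := Finset.card_pos.mpr ⟨w, hbuy⟩
      have hErase : ((s u).erase w).card = (s u).card - 1 := Finset.card_erase_of_mem hbuy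
      have hEcast : (ecc (graph n s') u : ℝ≥0∞) ≤ (E : ℝ≥0∞) + ((c.length - 2 : ℕ) : ℝ≥0∞) := by
        calc (ecc (graph n s') u : ℝ≥0∞)
            ≤ ((E + ((c.length - 2 : ℕ) : ℕ∞) : ℕ∞) : ℝ≥0∞) := ENat.toENNReal_mono hecc
          _ = (E : ℝ≥0∞) + ((c.length - 2 : ℕ) : ℝ≥0∞) := by
              rw [ENat.toENNReal_add, ENat.toENNReal_coe]
      have hchain : A * (s u).card + (E : ℝ≥0∞) ≤
          (A * (((s u).card - 1 : ℕ) : ℝ≥0∞) + ((c.length - 2 : ℕ) : ℝ≥0∞)) + (E : ℝ≥0∞) := by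
        calc A * (s u).card + (E : ℝ≥0∞)
            ≤ A * ((s u).erase w).card + (ecc (graph n s') u : ℝ≥0∞) := h
          _ ≤ A * (((s u).card - 1 : ℕ) : ℝ≥0∞) +
              ((E : ℝ≥0∞) + ((c.length - 2 : ℕ) : ℝ≥0∞)) := by
              rw [hErase]; exact add_le_add_right hEcast _
          _ = (A * (((s u).card - 1 : ℕ) : ℝ≥0∞) + ((c.length - 2 : ℕ) : ℝ≥0∞)) + (E : ℝ≥0∞) := by
              ring
      rw [ENNReal.add_le_add_iff_right hEtop] at hchain
      have hsplit : A * ((s u).card : ℝ≥0∞) =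
          A * (((s u).card - 1 : ℕ) : ℝ≥0∞) + A := by
        have h1 : ((s u).card : ℝ≥0∞) = (((s u).card - 1 : ℕ) : ℝ≥0∞) + 1 := by
          exact_mod_cast congrArg (fun k : ℕ => (k : ℝ≥0∞))
            (by omega : (s u).card = (s u).card - 1 + 1)
        rw [h1, mul_add, mul_one]
      rw [hsplit] at hchain
      have hfin : A * (((s u).card - 1 : ℕ) : ℝ≥0∞) ≠ ⊤ :=
        ENNReal.mul_ne_top ENNReal.ofReal_ne_top (ENNReal.natCast_ne_top _)
      rw [ENNReal.add_le_add_iff_left hfin] at hchain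
      have hfinal : α ≤ ((c.length - 2 : ℕ) : ℝ) := by
        rw [hA, ← ENNReal.ofReal_natCast] at hchain
        exact (ENNReal.ofReal_le_ofReal_iff (by positivity)).mp hchain
      have hcast : ((c.length - 2 : ℕ) : ℝ) = (c.length : ℝ) - 2 := by
        have h2 : (2 : ℕ) ≤ c.length := by omega
        push_cast [Nat.cast_sub h2]
        ring
      rw [hcast] at hfinal
      linarith
  revert he
  induction e using Sym2.ind with
  | _ u w =>
    intro he
    have hadj : (graph n s).Adj u w := c.adj_of_mem_edges he
    rcases hadj.2 with hbuy | hbuy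
    · exact key u w he hbuy
    · exact key w u (by rwa [Sym2.eq_swap] at he) hbuy
end

section
/- If G is a non-tree equilibrium graph and H is a biconnected component of G (with more than two vertices), then every edge e of H is contained in some min cycle of H. -/
/-!
Max-distance network creation game (Demaine et al.):
`n` agents, agent `v` buys edges to the agents in `s v`, each at cost `α`.
The resulting graph has an edge `(u,v)` iff `u ∈ s v` or `v ∈ s u`.
Agent `v`'s cost is `α * |s v|` plus its eccentricity (max distance, `⊤` if
disconnected). A profile is a (pure Nash) equilibrium if no agent can strictly
decrease its cost by unilaterally changing its edge set.
-/

open SimpleGraph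
open scoped ENNReal

open NCG

set_option linter.unusedSectionVars false
namespace EMC
variable {V : Type*} [DecidableEq V] {G : SimpleGraph V}

lemma walk_of_induce_walk {s : Set V} : ∀ {a b : s} (_ : (G.induce s).Walk a b),
    ∃ p : G.Walk a.1 b.1, ∀ x ∈ p.support, x ∈ s := by
  intro a b w
  induction w with
  | nil =>
      rename_i A
      refine ⟨.nil, ?_⟩
      intro x hx
      simp only [Walk.support_nil, List.mem_singleton] at hx
      subst hx; exact A.2
  | cons h p ih =>
      rename_i A B C
      obtain ⟨q, hq⟩ := ih
      refine ⟨.cons (by exact h) q, ?_⟩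
      intro x hx
      change x ∈ (A : V) :: q.support at hx
      rw [List.mem_cons] at hx
      rcases hx with rfl | hx
      · exact A.2
      · exact hq x hx

lemma neighbor_in {B : Finset V} (hcard : 2 < B.card)
    (hconn : ∀ w ∈ B, (G.induce ((B : Set V) \ {w})).Connected)
    {a p : V} (ha : a ∈ B) (hp : p ∈ B) (hap : a ≠ p) :
    ∃ w ∈ B, w ≠ p ∧ G.Adj a w := by
  have hec : 1 < (B.erase p).card := by
    have := Finset.card_erase_of_mem hp
    omega
  obtain ⟨b', hb', hb'a⟩ := Finset.exists_mem_ne hec a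
  have hbB := Finset.mem_of_mem_erase hb'
  have hbp := Finset.ne_of_mem_erase hb'
  have haS : a ∈ (B : Set V) \ {p} := ⟨ha, by simpa using hap⟩
  have hbS : b' ∈ (B : Set V) \ {p} := ⟨hbB, by simpa using hbp⟩
  have hr := (hconn p hp).preconnected ⟨a, haS⟩ ⟨b', hbS⟩
  obtain ⟨w⟩ := hr
  obtain ⟨q, hq⟩ := walk_of_induce_walk w
  cases q with
  | nil => exact absurd rfl hb'a.symm
  | cons h r =>
      rename_i m
      have hm : m ∈ (B : Set V) \ {p} := hq m (by rw [Walk.support_cons]; exact List.mem_cons_of_mem _ r.start_mem_support)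
      exact ⟨m, hm.1, by simpa using hm.2, h⟩

lemma induce_finset_connected {B : Finset V} (hcard : 2 < B.card)
    (hconn : ∀ w ∈ B, (G.induce ((B : Set V) \ {w})).Connected) :
    (G.induce (B : Set V)).Connected := by
  obtain ⟨w₀, hw₀⟩ := Finset.card_pos.mp (by omega : 0 < B.card)
  obtain ⟨p, hpB, hpw⟩ := Finset.exists_mem_ne (by omega : 1 < B.card) w₀
  obtain ⟨m, hmB, hmp, hadj⟩ := neighbor_in hcard hconn hw₀ hpB (Ne.symm hpw)
  have hmw : m ≠ w₀ := hadj.ne'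
  have hset : (B : Set V) = ((B : Set V) \ {w₀}) ∪ {w₀, m} := by
    ext z
    constructor
    · intro hz
      by_cases hzw : z = w₀
      · exact Or.inr (Or.inl hzw)
      · exact Or.inl ⟨hz, hzw⟩
    · rintro (⟨hz, _⟩ | rfl | rfl) <;> simp_all
  rw [hset]
  exact induce_union_connected (hconn w₀ hw₀).preconnected (induce_pair_connected_of_adj hadj).preconnected
    ⟨m, ⟨hmB, by simpa using hmw⟩, by simp⟩

lemma not_mem_takeUntil {a b : V} {p : G.Walk a b} (hp : p.IsPath) {z : V}
    (hz : z ∈ p.support) (hzb : z ≠ b) : b ∉ (p.takeUntil z hz).support := by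
  intro hb
  have hnd : p.support.Nodup := hp.support_nodup
  rw [← p.take_spec hz, Walk.support_append] at hnd
  exact (List.disjoint_of_nodup_append hnd) hb
    (Walk.end_mem_tail_support_of_ne hzb (p.dropUntil z hz))

lemma not_mem_dropUntil {a b : V} {p : G.Walk a b} (hp : p.IsPath) {z : V}
    (hz : z ∈ p.support) (hza : z ≠ a) : a ∉ (p.dropUntil z hz).support := by
  intro hadrop
  have hnd : p.support.Nodup := hp.support_nodup
  rw [← p.take_spec hz, Walk.support_append] at hnd
  have : a ∈ (p.dropUntil z hz).support.tail := by
    have := (p.dropUntil z hz).support_eq_cons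
    rw [this] at hadrop
    rcases List.mem_cons.mp hadrop with rfl | h
    · exact absurd rfl hza
    · exact h
  exact (List.disjoint_of_nodup_append hnd) ((p.takeUntil z hz).start_mem_support) this

lemma not_mem_edges_of_isPath {x y : V} {p : G.Walk x y} (hp : p.IsPath)
    (hlen : 2 ≤ p.length) : s(x, y) ∉ p.edges := by
  intro he
  cases p with
  | nil => simp at he
  | cons h r =>
      rename_i m
      rw [Walk.edges_cons, List.mem_cons] at he
      rcases he with he | he
      · have : y = m := by
          rw [Sym2.eq_iff] at he
          rcases he with ⟨-, rfl⟩ | ⟨h1, h2⟩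
          · rfl
          · exact absurd h1 h.ne
        subst this
        have : r = Walk.nil := Walk.isPath_iff_eq_nil.mp hp.of_cons
        subst this
        simp [Walk.length_cons] at hlen
      · have hx : x ∈ r.support := Walk.fst_mem_support_of_mem_edges r he
        rw [Walk.cons_isPath_iff] at hp
        exact hp.2 hx


lemma concat_isPath {a b c : V} {p : G.Walk a b} (hp : p.IsPath) (h : G.Adj b c)
    (hc : c ∉ p.support) : (p.concat h).IsPath := by
  apply Walk.IsPath.mk'
  rw [Walk.support_concat]
  exact List.Nodup.append hp.support_nodup (List.nodup_singleton c)
    (by intro z hz hz'; rw [List.mem_singleton] at hz'; subst hz'; exact hc hz)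

lemma exists_cycle {B : Finset V} (hcard : 2 < B.card)
    (hconn : ∀ w ∈ B, (G.induce ((B : Set V) \ {w})).Connected)
    {u v : V} (hu : u ∈ B) (hv : v ∈ B) (huv : G.Adj u v) :
    ∃ c : G.Walk u u, c.IsCycle ∧ (∀ x ∈ c.support, x ∈ B) ∧ s(u, v) ∈ c.edges := by
  obtain ⟨w', hw'B, hw'v, hadj⟩ := neighbor_in hcard hconn hu hv huv.ne
  have hw'u : w' ≠ u := hadj.ne'
  have hvS : v ∈ (B : Set V) \ {u} := ⟨hv, by simpa using huv.ne'⟩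
  have hwS : w' ∈ (B : Set V) \ {u} := ⟨hw'B, by simpa using hw'u⟩
  obtain ⟨q0⟩ := (hconn u hu).preconnected ⟨v, hvS⟩ ⟨w', hwS⟩
  obtain ⟨q1, hq1⟩ := walk_of_induce_walk q0
  have hpPath := q1.bypass_isPath
  have hpsupp : ∀ x ∈ q1.bypass.support, x ∈ (B : Set V) \ {u} :=
    fun x hx => hq1 x (q1.support_bypass_subset hx)
  have hup : u ∉ q1.bypass.support := fun h => by simpa using (hpsupp u h).2
  refine ⟨Walk.cons huv (q1.bypass.concat hadj.symm), ?_, ?_, ?_⟩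
  · rw [Walk.cons_isCycle_iff]
    refine ⟨concat_isPath hpPath hadj.symm hup, ?_⟩
    rw [Walk.edges_concat, List.concat_eq_append, List.mem_append, List.mem_singleton]
    rintro (he | he)
    · exact hup (Walk.fst_mem_support_of_mem_edges _ he)
    · rw [Sym2.eq_iff] at he
      rcases he with ⟨h1, -⟩ | ⟨-, h2⟩
      · exact hw'u h1.symm
      · exact hw'v h2.symm
  · intro x hx
    rw [Walk.support_cons, List.mem_cons] at hx
    rcases hx with rfl | hx
    · exact hu
    · rw [Walk.support_concat, List.mem_append] at hx
      rcases hx with hx | hx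
      · exact (hpsupp x hx).1
      · rw [List.mem_singleton] at hx; subst hx; exact hu
  · rw [Walk.edges_cons]; exact List.mem_cons_self

lemma append_isCycle {x y : V} {p : G.Walk x y} {q : G.Walk y x}
    (hp : p.IsPath) (hq : q.IsPath) (hxy : x ≠ y)
    (hlen : 2 ≤ p.length ∨ 2 ≤ q.length)
    (hdisj : ∀ z, z ∈ p.support → z ∈ q.support → z = x ∨ z = y) :
    (p.append q).IsCycle := by
  have hpl : p.length ≠ 0 := fun h => hxy (Walk.eq_of_length_eq_zero h)
  have hql : q.length ≠ 0 := fun h => hxy (Walk.eq_of_length_eq_zero h).symm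
  have hxp : x ∉ p.support.tail := by
    have := hp.support_nodup
    rw [p.support_eq_cons] at this
    exact (List.nodup_cons.mp this).1
  have hyq : y ∉ q.support.tail := by
    have := hq.support_nodup
    rw [q.support_eq_cons] at this
    exact (List.nodup_cons.mp this).1
  have hptail : p.support.tail.Nodup := by
    have := hp.support_nodup
    rw [p.support_eq_cons] at this
    exact (List.nodup_cons.mp this).2
  have hqtail : q.support.tail.Nodup := by
    have := hq.support_nodup
    rw [q.support_eq_cons] at this
    exact (List.nodup_cons.mp this).2
  refine ⟨⟨⟨?_⟩, ?_⟩, ?_⟩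
  · -- edges nodup
    rw [Walk.edges_append]
    refine List.Nodup.append hp.isTrail.edges_nodup hq.isTrail.edges_nodup ?_
    intro e hep heq
    induction e using Sym2.ind with
    | _ a b =>
      have hab : a ≠ b := (p.adj_of_mem_edges hep).ne
      have hap : a ∈ p.support := Walk.fst_mem_support_of_mem_edges p hep
      have hbp : b ∈ p.support := Walk.snd_mem_support_of_mem_edges p hep
      have haq : a ∈ q.support := Walk.fst_mem_support_of_mem_edges q heq
      have hbq : b ∈ q.support := Walk.snd_mem_support_of_mem_edges q heq
      have he : s(a, b) = s(x, y) := by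
        rcases hdisj a hap haq with rfl | rfl
        · rcases hdisj b hbp hbq with rfl | rfl
          · exact absurd rfl hab
          · rfl
        · rcases hdisj b hbp hbq with rfl | rfl
          · exact Sym2.eq_swap
          · exact absurd rfl hab
      rw [he] at hep heq
      rcases hlen with hl | hl
      · exact not_mem_edges_of_isPath hp hl hep
      · rw [Sym2.eq_swap] at heq
        exact not_mem_edges_of_isPath hq hl heq
  · -- ne nil
    intro hnil
    have := congrArg Walk.length hnil
    rw [Walk.length_append, Walk.length_nil] at this
    omega
  · -- support tail nodup
    rw [Walk.tail_support_append]
    refine List.Nodup.append hptail hqtail ?_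
    intro z hzp hzq
    have hzp' : z ∈ p.support := by rw [p.support_eq_cons]; exact List.mem_cons_of_mem _ hzp
    have hzq' : z ∈ q.support := by rw [q.support_eq_cons]; exact List.mem_cons_of_mem _ hzq
    rcases hdisj z hzp' hzq' with rfl | rfl
    · exact hxp hzp
    · exact hyq hzq

lemma edist_spanningCoe_le {w : V} {c : G.Walk w w} {a b : V} (p : G.Walk a b)
    (hp : ∀ e ∈ p.edges, e ∈ c.edges) :
    c.toSubgraph.spanningCoe.edist a b ≤ p.length := by
  have hsub : ∀ e ∈ p.edges, e ∈ c.toSubgraph.spanningCoe.edgeSet := by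
    intro e he
    induction e using Sym2.ind with
    | _ a' b' =>
      rw [SimpleGraph.mem_edgeSet]
      show c.toSubgraph.Adj a' b'
      rw [← Subgraph.mem_edgeSet, Walk.mem_edges_toSubgraph]
      exact hp _ he
  have := SimpleGraph.edist_le (p.transfer _ hsub)
  rwa [Walk.length_transfer] at this


lemma cycle_split {w : V} {c : G.Walk w w} (hc : c.IsCycle) {x y : V}
    (hx : x ∈ c.support) (hy : y ∈ c.support) (hxy : x ≠ y) :
    ∃ (a1 : G.Walk x y) (a2 : G.Walk y x),
      a1.IsPath ∧ a2.IsPath ∧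
      (∀ e ∈ a1.edges, e ∈ c.edges) ∧ (∀ e ∈ a2.edges, e ∈ c.edges) ∧
      (∀ z ∈ a1.support, z ∈ c.support) ∧ (∀ z ∈ a2.support, z ∈ c.support) ∧
      a1.length + a2.length = c.length ∧
      (∀ e ∈ c.edges, e ∈ a1.edges ∨ e ∈ a2.edges) := by
  have hc'cyc : (c.rotate x hx).IsCycle := hc.rotate hx
  have hy' : y ∈ (c.rotate x hx).support := by
    rw [← Walk.mem_verts_toSubgraph, Walk.toSubgraph_rotate, Walk.mem_verts_toSubgraph]
    exact hy
  set c' := c.rotate x hx with hc'def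
  set a1 := c'.takeUntil y hy' with ha1def
  set a2 := c'.dropUntil y hy' with ha2def
  have hspec : a1.append a2 = c' := c'.take_spec hy'
  have hmemc' : ∀ z, z ∈ c'.support ↔ z ∈ c.support := by
    intro z
    rw [← Walk.mem_verts_toSubgraph, ← Walk.mem_verts_toSubgraph, hc'def,
      Walk.toSubgraph_rotate]
  have hedgec' : ∀ e, e ∈ c'.edges ↔ e ∈ c.edges := fun e =>
    (Walk.rotate_edges c x hx).perm.mem_iff
  have hedgesplit : ∀ e, e ∈ c'.edges ↔ e ∈ a1.edges ∨ e ∈ a2.edges := by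
    intro e
    rw [← hspec, Walk.edges_append, List.mem_append]
  have htail : a1.support.tail ++ a2.support.tail = c'.support.tail := by
    rw [← Walk.tail_support_append, hspec]
  have hnd : (a1.support.tail ++ a2.support.tail).Nodup := by
    rw [htail]; exact hc'cyc.support_nodup
  have hnd1 : a1.support.tail.Nodup := (List.nodup_append.mp hnd).1
  have hnd2 : a2.support.tail.Nodup := (List.nodup_append.mp hnd).2.1
  have hdisjt : a1.support.tail.Disjoint a2.support.tail := List.disjoint_of_nodup_append hnd
  have ha2ne : x ∈ a2.support.tail := Walk.end_mem_tail_support_of_ne (Ne.symm hxy) a2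
  have ha1ne : y ∈ a1.support.tail := Walk.end_mem_tail_support_of_ne hxy a1
  have ha1path : a1.IsPath := by
    apply Walk.IsPath.mk'
    rw [a1.support_eq_cons, List.nodup_cons]
    exact ⟨fun hmem => hdisjt hmem ha2ne, hnd1⟩
  have ha2path : a2.IsPath := by
    apply Walk.IsPath.mk'
    rw [a2.support_eq_cons, List.nodup_cons]
    exact ⟨fun hmem => hdisjt ha1ne hmem, hnd2⟩
  have hlen : a1.length + a2.length = c.length := by
    have h1 := congrArg Walk.length hspec
    rw [Walk.length_append] at h1
    have h2 : c'.length = c.length := by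
      have h3 := congrArg Walk.length (c.take_spec hx)
      rw [Walk.length_append] at h3
      have : c'.length = (c.dropUntil x hx).length + (c.takeUntil x hx).length := by
        rw [hc'def]
        show ((c.dropUntil x hx).append (c.takeUntil x hx)).length = _
        rw [Walk.length_append]
      omega
    omega
  refine ⟨a1, a2, ha1path, ha2path, ?_, ?_, ?_, ?_, hlen, ?_⟩
  · intro e he
    rw [← hedgec' e, hedgesplit e]; exact Or.inl he
  · intro e he
    rw [← hedgec' e, hedgesplit e]; exact Or.inr he
  · intro z hz
    rw [← hmemc' z]
    exact c'.support_takeUntil_subset hy' hz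
  · intro z hz
    rw [← hmemc' z]
    exact c'.support_dropUntil_subset hy' hz
  · intro e he
    rw [← hedgesplit e, hedgec' e]; exact he


lemma main_lemma (G : SimpleGraph V) (B : Finset V)
    (hcard : 2 < B.card)
    (hconn : ∀ w ∈ B, (G.induce ((B : Set V) \ {w})).Connected)
    (hmax : ∀ B' : Finset V, B ⊆ B' →
      (2 < B'.card ∧ ∀ w ∈ B', (G.induce ((B' : Set V) \ {w})).Connected) → B' = B)
    {u v : V} (hu : u ∈ B) (hv : v ∈ B) (huv : G.Adj u v) :
    ∃ c : G.Walk u u,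
      (c.IsCycle ∧ ∀ x₁ ∈ c.support, ∀ x₂ ∈ c.support,
        c.toSubgraph.spanningCoe.edist x₁ x₂ = G.edist x₁ x₂) ∧
      (∀ x ∈ c.support, x ∈ B) ∧ s(u, v) ∈ c.edges := by
  classical
  set S : Set ℕ := {m | ∃ c : G.Walk u u,
    (c.IsCycle ∧ (∀ x ∈ c.support, x ∈ B) ∧ s(u, v) ∈ c.edges) ∧ c.length = m} with hSdef
  have hSne : S.Nonempty := by
    obtain ⟨c, h1, h2, h3⟩ := exists_cycle hcard hconn hu hv huv
    exact ⟨c.length, c, ⟨h1, h2, h3⟩, rfl⟩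
  obtain ⟨c, ⟨hcyc, hsupp, hedge⟩, hlen⟩ := Nat.sInf_mem hSne
  have hmin : ∀ c' : G.Walk u u, c'.IsCycle → (∀ x ∈ c'.support, x ∈ B) →
      s(u, v) ∈ c'.edges → c.length ≤ c'.length := by
    intro c' h1 h2 h3
    rw [hlen]
    exact Nat.sInf_le ⟨c', ⟨h1, h2, h3⟩, rfl⟩
  refine ⟨c, ⟨hcyc, ?_⟩, hsupp, hedge⟩
  have hHle : c.toSubgraph.spanningCoe ≤ G := c.toSubgraph.spanningCoe_le
  set H := c.toSubgraph.spanningCoe with hHdef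
  have hge : ∀ x₁ x₂ : V, G.edist x₁ x₂ ≤ H.edist x₁ x₂ := fun x₁ x₂ => edist_anti hHle
  by_contra hcon
  push_neg at hcon
  obtain ⟨x₀, hx₀, y₀, hy₀, hne₀⟩ := hcon
  have hfin : ∀ x ∈ c.support, ∀ y ∈ c.support, H.edist x y ≠ ⊤ := by
    intro x hx y hy
    by_cases hxy : x = y
    · subst hxy; simp [SimpleGraph.edist_self]
    · obtain ⟨a1, a2, -, -, he1, -, -, -, -, -⟩ := cycle_split hcyc hx hy hxy
      have hle := edist_spanningCoe_le a1 he1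
      intro ht
      rw [hHdef] at ht
      rw [ht, top_le_iff] at hle
      exact (ENat.coe_ne_top _) hle
  set T : Set ℕ := {k | ∃ x ∈ c.support, ∃ y ∈ c.support,
    G.edist x y = (k : ℕ∞) ∧ G.edist x y < H.edist x y} with hTdef
  have hTne : T.Nonempty := by
    have hlt : G.edist x₀ y₀ < H.edist x₀ y₀ := lt_of_le_of_ne (hge _ _) (Ne.symm hne₀)
    have hnetop : G.edist x₀ y₀ ≠ ⊤ :=
      fun h => (hfin x₀ hx₀ y₀ hy₀) (top_le_iff.mp (h ▸ hge x₀ y₀))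
    exact ⟨(G.edist x₀ y₀).toNat, x₀, hx₀, y₀, hy₀, (ENat.coe_toNat hnetop).symm, hlt⟩
  obtain ⟨x, hx, y, hy, hkeq, hklt⟩ := Nat.sInf_mem hTne
  set k := sInf T with hkdef
  have hkmin : ∀ k' ∈ T, k ≤ k' := fun _ h => Nat.sInf_le h
  have hxyne : x ≠ y := by
    rintro rfl
    simp [SimpleGraph.edist_self] at hklt
  have hk1 : 1 ≤ k := by
    rcases Nat.eq_zero_or_pos k with h0 | h1
    · rw [h0] at hkeq
      exact absurd (SimpleGraph.edist_eq_zero_iff.mp (by exact_mod_cast hkeq)) hxyne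
    · exact h1
  obtain ⟨p', hp'len⟩ := SimpleGraph.exists_walk_of_edist_eq_coe hkeq
  set P := p'.bypass with hPdef
  have hPpath : P.IsPath := p'.bypass_isPath
  have hPlen : P.length = k := by
    have h1 : P.length ≤ k := hp'len ▸ p'.length_bypass_le
    have h2 : (k : ℕ∞) ≤ P.length := hkeq ▸ SimpleGraph.edist_le P
    exact le_antisymm h1 (by exact_mod_cast h2)
  have hPdisj : ∀ z ∈ P.support, z ∈ c.support → z = x ∨ z = y := by
    intro z hzP hzc
    by_contra hzz
    push_neg at hzz
    obtain ⟨hzx, hzy⟩ := hzz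
    have hspec := P.take_spec hzP
    have hl12 : (P.takeUntil z hzP).length + (P.dropUntil z hzP).length = k := by
      rw [← hPlen, ← Walk.length_append, hspec]
    have hl1pos : (P.takeUntil z hzP).length ≠ 0 :=
      fun h => hzx (Walk.eq_of_length_eq_zero h).symm
    have hl2pos : (P.dropUntil z hzP).length ≠ 0 :=
      fun h => hzy (Walk.eq_of_length_eq_zero h)
    have hd1 : G.edist x z ≤ (P.takeUntil z hzP).length := SimpleGraph.edist_le _
    have hd2 : G.edist z y ≤ (P.dropUntil z hzP).length := SimpleGraph.edist_le _
    have hcase : G.edist x z < H.edist x z ∨ G.edist z y < H.edist z y := by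
      by_contra hno
      push_neg at hno
      obtain ⟨h1, h2⟩ := hno
      have ht : H.edist x y ≤ H.edist x z + H.edist z y := SimpleGraph.edist_triangle
      have ht2 : H.edist x y ≤ (k : ℕ∞) := by
        calc H.edist x y ≤ H.edist x z + H.edist z y := ht
          _ ≤ G.edist x z + G.edist z y := add_le_add h1 h2
          _ ≤ ((P.takeUntil z hzP).length : ℕ∞) + ((P.dropUntil z hzP).length : ℕ∞) :=
              add_le_add hd1 hd2
          _ = (k : ℕ∞) := by rw [← Nat.cast_add, hl12]
      exact absurd hklt (not_lt.mpr (ht2.trans hkeq.ge))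
    rcases hcase with hlt' | hlt'
    · have hne' : G.edist x z ≠ ⊤ := fun h => by rw [h, top_le_iff] at hd1; simp at hd1
      have hmem : (G.edist x z).toNat ∈ T :=
        ⟨x, hx, z, hzc, (ENat.coe_toNat hne').symm, hlt'⟩
      have hk2 := hkmin _ hmem
      have hk3 : (G.edist x z).toNat ≤ (P.takeUntil z hzP).length := by
        have := ENat.toNat_le_toNat hd1 (by simp)
        simpa using this
      omega
    · have hne' : G.edist z y ≠ ⊤ := fun h => by rw [h, top_le_iff] at hd2; simp at hd2
      have hmem : (G.edist z y).toNat ∈ T :=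
        ⟨z, hzc, y, hy, (ENat.coe_toNat hne').symm, hlt'⟩
      have hk2 := hkmin _ hmem
      have hk3 : (G.edist z y).toNat ≤ (P.dropUntil z hzP).length := by
        have := ENat.toNat_le_toNat hd2 (by simp)
        simpa using this
      omega
  obtain ⟨a1, a2, ha1P, ha2P, he1, he2, hs1, hs2, hlsum, hedge_or⟩ :=
    cycle_split hcyc hx hy hxyne
  have hb1 : H.edist x y ≤ (a1.length : ℕ∞) := edist_spanningCoe_le a1 he1
  have hb2 : H.edist x y ≤ (a2.length : ℕ∞) := by
    rw [SimpleGraph.edist_comm]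
    exact edist_spanningCoe_le a2 he2
  have hL1 : k < a1.length := by
    have : (k : ℕ∞) < (a1.length : ℕ∞) := lt_of_lt_of_le (hkeq ▸ hklt) hb1
    exact_mod_cast this
  have hL2 : k < a2.length := by
    have : (k : ℕ∞) < (a2.length : ℕ∞) := lt_of_lt_of_le (hkeq ▸ hklt) hb2
    exact_mod_cast this
  have hc₂ : ∃ c₂ : G.Walk x x, c₂.IsCycle ∧ s(u, v) ∈ c₂.edges ∧
      c₂.length < c.length ∧ (∀ z ∈ c₂.support, z ∈ B ∨ z ∈ P.support) := by
    rcases hedge_or _ hedge with h1 | h2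
    · refine ⟨a1.append P.reverse, ?_, ?_, ?_, ?_⟩
      · apply append_isCycle ha1P hPpath.reverse hxyne (Or.inl (by omega))
        intro z hz1 hz2
        rw [Walk.support_reverse, List.mem_reverse] at hz2
        exact hPdisj z hz2 (hs1 z hz1)
      · rw [Walk.edges_append, List.mem_append]
        exact Or.inl h1
      · rw [Walk.length_append, Walk.length_reverse, hPlen]
        omega
      · intro z hz
        rw [Walk.mem_support_append_iff] at hz
        rcases hz with hz | hz
        · exact Or.inl (hsupp z (hs1 z hz))
        · rw [Walk.support_reverse, List.mem_reverse] at hz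
          exact Or.inr hz
    · refine ⟨P.append a2, ?_, ?_, ?_, ?_⟩
      · apply append_isCycle hPpath ha2P hxyne (Or.inr (by omega))
        intro z hz1 hz2
        exact hPdisj z hz1 (hs2 z hz2)
      · rw [Walk.edges_append, List.mem_append]
        exact Or.inr h2
      · rw [Walk.length_append, hPlen]
        omega
      · intro z hz
        rw [Walk.mem_support_append_iff] at hz
        rcases hz with hz | hz
        · exact Or.inr hz
        · exact Or.inl (hsupp z (hs2 z hz))
  obtain ⟨c₂, hc₂cyc, hc₂edge, hc₂len, hc₂supp⟩ := hc₂
  set B' : Finset V := B ∪ P.support.toFinset with hB'def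
  have hBsub : B ⊆ B' := Finset.subset_union_left
  have hcoe : (B' : Set V) = (B : Set V) ∪ {t | t ∈ P.support} := by
    rw [hB'def, Finset.coe_union, List.coe_toFinset]
  have hxB : x ∈ B := hsupp x hx
  have hyB : y ∈ B := hsupp y hy
  have hB'conn : ∀ w ∈ B', (G.induce ((B' : Set V) \ {w})).Connected := by
    intro w _
    have hBconn : (G.induce ((B : Set V) \ {w})).Connected := by
      by_cases hwB : w ∈ B
      · exact hconn w hwB
      · have hseteq : (B : Set V) \ {w} = (B : Set V) := by
          ext z
          simp only [Set.mem_diff, Set.mem_singleton_iff, Finset.mem_coe, and_iff_left_iff_imp]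
          rintro hz rfl
          exact hwB hz
        rw [hseteq]
        exact induce_finset_connected hcard hconn
    obtain ⟨β, hβxy, hβw⟩ : ∃ β, (β = x ∨ β = y) ∧ β ≠ w := by
      by_cases hwx : x = w
      · exact ⟨y, Or.inr rfl, fun h => hxyne (by rw [hwx, h])⟩
      · exact ⟨x, Or.inl rfl, hwx⟩
    have hβB : β ∈ B := by rcases hβxy with rfl | rfl; exacts [hxB, hyB]
    have hβS : β ∈ (B' : Set V) \ {w} :=
      ⟨by rw [hcoe]; exact Or.inl hβB, by simpa using hβw⟩
    apply G.induce_connected_of_patches β hβS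
    intro z hz
    obtain ⟨hzB', hzw⟩ := hz
    rw [Set.mem_singleton_iff] at hzw
    rw [hcoe] at hzB'
    have hBsubS : (B : Set V) \ {w} ⊆ (B' : Set V) \ {w} := by
      apply Set.diff_subset_diff_left
      rw [hcoe]; exact Set.subset_union_left
    rcases hzB' with hzB | hzP
    · refine ⟨(B : Set V) \ {w}, hBsubS, ⟨hβB, by simpa using hβw⟩, ⟨hzB, by simpa using hzw⟩, ?_⟩
      exact hBconn.preconnected _ _
    · -- z on P, z ≠ w : find a w-free subwalk of P from an endpoint to z
      have hQ : ∃ QS : Set V, (G.induce QS).Connected ∧ z ∈ QS ∧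
          (∃ e₀ ∈ QS, e₀ ∈ B ∧ e₀ ≠ w) ∧ QS ⊆ {t | t ∈ P.support} ∧ w ∉ QS := by
        by_cases hwP : w ∈ P.support
        · have hzsplit : z ∈ (P.takeUntil w hwP).support ∨ z ∈ (P.dropUntil w hwP).support := by
            rw [← Walk.mem_support_append_iff, P.take_spec hwP]
            exact hzP
          rcases hzsplit with hz1 | hz2
          · refine ⟨{t | t ∈ ((P.takeUntil w hwP).takeUntil z hz1).support},
              Walk.connected_induce_support _, by simp, ⟨x, ?_, hxB, ?_⟩, ?_, ?_⟩
            · exact Walk.start_mem_support _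
            · intro hxw
              subst hxw
              exact (not_mem_takeUntil (hPpath.takeUntil hwP) hz1 hzw) (Walk.start_mem_support _)
            · intro t ht
              exact P.support_takeUntil_subset hwP ((P.takeUntil w hwP).support_takeUntil_subset hz1 ht)
            · exact not_mem_takeUntil (hPpath.takeUntil hwP) hz1 hzw
          · refine ⟨{t | t ∈ ((P.dropUntil w hwP).dropUntil z hz2).support},
              Walk.connected_induce_support _, by simp, ⟨y, ?_, hyB, ?_⟩, ?_, ?_⟩
            · exact Walk.end_mem_support _
            · intro hyw
              subst hyw
              exact (not_mem_dropUntil (hPpath.dropUntil hwP) hz2 hzw)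
                (Walk.end_mem_support _)
            · intro t ht
              exact P.support_dropUntil_subset hwP
                ((P.dropUntil w hwP).support_dropUntil_subset hz2 ht)
            · exact not_mem_dropUntil (hPpath.dropUntil hwP) hz2 hzw
        · refine ⟨{t | t ∈ P.support}, Walk.connected_induce_support _, hzP,
            ⟨x, P.start_mem_support, hxB, ?_⟩, le_refl _, hwP⟩
          intro hxw
          subst hxw
          exact hwP P.start_mem_support
      obtain ⟨QS, hQconn, hzQ, ⟨e₀, he₀Q, he₀B, he₀w⟩, hQsub, hwQ⟩ := hQ
      refine ⟨((B : Set V) \ {w}) ∪ QS, ?_, ?_, Or.inr hzQ, ?_⟩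
      · intro t ht
        rcases ht with ht | ht
        · exact hBsubS ht
        · refine ⟨?_, ?_⟩
          · rw [hcoe]; exact Or.inr (hQsub ht)
          · intro htw
            rw [Set.mem_singleton_iff] at htw
            subst htw
            exact hwQ ht
      · exact Or.inl ⟨hβB, by simpa using hβw⟩
      · exact (induce_union_connected hBconn.preconnected hQconn.preconnected
          ⟨e₀, ⟨he₀B, by simpa using he₀w⟩, he₀Q⟩).preconnected _ _
  have hB'eq : B' = B := hmax B' hBsub
    ⟨lt_of_lt_of_le hcard (Finset.card_le_card hBsub), hB'conn⟩
  have hPB : ∀ z ∈ P.support, z ∈ B := by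
    intro z hz
    have : z ∈ B' := Finset.mem_union_right _ (List.mem_toFinset.mpr hz)
    rwa [hB'eq] at this
  have hu₂ : u ∈ c₂.support := Walk.fst_mem_support_of_mem_edges c₂ hc₂edge
  have h3cyc : (c₂.rotate u hu₂).IsCycle := hc₂cyc.rotate hu₂
  have h3edge : s(u, v) ∈ (c₂.rotate u hu₂).edges :=
    ((Walk.rotate_edges c₂ u hu₂).perm.mem_iff).mpr hc₂edge
  have h3supp : ∀ z ∈ (c₂.rotate u hu₂).support, z ∈ B := by
    intro z hz
    rw [← Walk.mem_verts_toSubgraph, Walk.toSubgraph_rotate, Walk.mem_verts_toSubgraph] at hz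
    rcases hc₂supp z hz with h | h
    · exact h
    · exact hPB z h
  have h3len : (c₂.rotate u hu₂).length = c₂.length := by
    have h1 := congrArg Walk.length (c₂.take_spec hu₂)
    rw [Walk.length_append] at h1
    have h2 : (c₂.rotate u hu₂).length =
        (c₂.dropUntil u hu₂).length + (c₂.takeUntil u hu₂).length := by
      show ((c₂.dropUntil u hu₂).append (c₂.takeUntil u hu₂)).length = _
      rw [Walk.length_append]
    omega
  have := hmin _ h3cyc h3supp h3edge
  omega

end EMC

/-- every edge of a biconnected component lies on a min cycle of
the component. -/
theorem edge_in_min_cycle (n : ℕ) (α : ℝ) (hα : 0 < α)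
    (s : Fin n → Finset (Fin n)) (hs : IsEquilibrium α s)
    (hnt : ¬ (graph n s).IsTree)
    (B : Finset (Fin n)) (hB : IsBicomp (graph n s) B)
    (u v : Fin n) (hu : u ∈ B) (hv : v ∈ B) (huv : (graph n s).Adj u v) :
    ∃ (w : Fin n) (c : (graph n s).Walk w w), IsMinCycle (graph n s) c ∧
      (∀ x ∈ c.support, x ∈ B) ∧ s(u, v) ∈ c.edges := by
  obtain ⟨⟨hcard, hconn⟩, hmax⟩ := hB
  obtain ⟨c, hmc, hcs, hce⟩ := EMC.main_lemma (graph n s) B hcard hconn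
    (fun B' hsub hbc => hmax B' hsub hbc) hu hv huv
  exact ⟨u, c, hmc, hcs, hce⟩
end

section
/- For α > 1, in an equilibrium graph G of the max-distance network creation game, fix a shortest path tree T rooted at a central vertex v₀ (a vertex with D(v₀) = rad(G)). Then every vertex buys at most one edge not contained in T. -/
/-!
Max-distance network creation game (Demaine et al.):
`n` agents, agent `v` buys edges to the agents in `s v`, each at cost `α`.
The resulting graph has an edge `(u,v)` iff `u ∈ s v` or `v ∈ s u`.
Agent `v`'s cost is `α * |s v|` plus its eccentricity (max distance, `⊤` if
disconnected). A profile is a (pure Nash) equilibrium if no agent can strictly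
decrease its cost by unilaterally changing its edge set.
-/

open SimpleGraph
open scoped ENNReal

open NCG
/-- for `α > 1`, w.r.t. a shortest path tree rooted at a central
vertex, every vertex buys at most one non-tree edge. -/
theorem at_most_one_nontree_edge (n : ℕ) (α : ℝ) (hα : 1 < α)
    (s : Fin n → Finset (Fin n)) (hs : IsEquilibrium α s)
    (T : SimpleGraph (Fin n)) (v₀ : Fin n)
    (hT : IsSPT (graph n s) T v₀) (hcentral : ecc (graph n s) v₀ = NCG.radius (graph n s)) :
    ∀ u : Fin n, {w : Fin n | w ∈ s u ∧ w ≠ u ∧ ¬ T.Adj u w}.ncard ≤ 1 := by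
  intro u
  by_contra hcon
  rw [not_le] at hcon
  obtain ⟨w₁, w₂, hw₁, hw₂, hne⟩ := (Set.one_lt_ncard_iff (Set.toFinite _)).mp hcon
  obtain ⟨hw₁s, hw₁u, hw₁T⟩ := hw₁
  obtain ⟨hw₂s, hw₂u, hw₂T⟩ := hw₂
  obtain ⟨hTle, hTtree, hTdist⟩ := hT
  set G := graph n s with hG
  set t : Finset (Fin n) := insert v₀ (((s u).erase w₁).erase w₂) with ht
  set s' := Function.update s u t with hs'
  set G' := graph n s' with hG'
  have hmem : ∀ x, x ∈ s u → x ≠ w₁ → x ≠ w₂ → x ∈ t := fun x hx h1 h2 =>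
    Finset.mem_insert_of_mem (Finset.mem_erase.mpr ⟨h2, Finset.mem_erase.mpr ⟨h1, hx⟩⟩)
  -- T is still a subgraph of the deviated graph
  have hTle' : T ≤ G' := by
    intro a b hab
    have h := hTle hab
    rw [hG, graph, SimpleGraph.fromRel_adj] at h
    rw [hG', graph, SimpleGraph.fromRel_adj]
    refine ⟨h.1, ?_⟩
    rcases h.2 with hba | hab'
    · left
      by_cases ha : a = u
      · subst ha
        rw [hs', Function.update_self]
        exact hmem b hba (fun e => hw₁T (e ▸ hab)) (fun e => hw₂T (e ▸ hab))
      · rwa [hs', Function.update_of_ne ha]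
    · right
      by_cases hb : b = u
      · subst hb
        rw [hs', Function.update_self]
        exact hmem a hab' (fun e => hw₁T (e ▸ hab.symm)) (fun e => hw₂T (e ▸ hab.symm))
      · rwa [hs', Function.update_of_ne hb]
  -- G is connected
  have hGconn : G.Connected := hTtree.isConnected.mono hTle
  -- the radius is finite
  have hfin : ∀ x, G.edist v₀ x ≠ ⊤ := fun x =>
    SimpleGraph.edist_ne_top_iff_reachable.mpr (hGconn v₀ x)
  haveI : Nonempty (Fin n) := ⟨u⟩
  have hR : ecc G v₀ ≠ ⊤ := by
    obtain ⟨x, hx⟩ := Finite.exists_max (fun x => G.edist v₀ x)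
    rw [ecc, ← lt_top_iff_ne_top]
    exact lt_of_le_of_lt (iSup_le hx) (lt_top_iff_ne_top.mpr (hfin x))
  -- distance from u to v₀ in the deviated graph is at most 1
  have hd1 : G'.edist u v₀ ≤ 1 := by
    by_cases huv : u = v₀
    · subst huv; rw [SimpleGraph.edist_self]; exact zero_le_one
    · refine le_of_eq (SimpleGraph.edist_eq_one_iff_adj.mpr ?_)
      rw [hG', graph, SimpleGraph.fromRel_adj]
      exact ⟨huv, Or.inl (by rw [hs', Function.update_self]; exact Finset.mem_insert_self _ _)⟩
  -- eccentricity bound for u after deviation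
  have hecc' : ecc G' u ≤ 1 + ecc G v₀ := by
    rw [ecc]
    refine iSup_le fun x => ?_
    calc G'.edist u x ≤ G'.edist u v₀ + G'.edist v₀ x := SimpleGraph.edist_triangle
    _ ≤ 1 + ecc G v₀ := by
        refine add_le_add hd1 ?_
        calc G'.edist v₀ x ≤ T.edist v₀ x := SimpleGraph.edist_anti hTle'
        _ = G.edist v₀ x := hTdist x
        _ ≤ ecc G v₀ := le_iSup (fun y => G.edist v₀ y) x
  -- cardinality bound
  have hcard : t.card + 1 ≤ (s u).card := by
    have h2 : w₂ ∈ (s u).erase w₁ := Finset.mem_erase.mpr ⟨fun e => hne e.symm, hw₂s⟩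
    have e1 := Finset.card_erase_of_mem h2
    have e2 := Finset.card_erase_of_mem hw₁s
    have h3 := Finset.card_insert_le v₀ (((s u).erase w₁).erase w₂)
    have h4 : 0 < ((s u).erase w₁).card := Finset.card_pos.mpr ⟨w₂, h2⟩
    rw [ht]
    omega
  -- set up abbreviations
  set A := ENNReal.ofReal α with hA
  have hA1 : 1 < A := ENNReal.one_lt_ofReal.mpr hα
  have hAtop : A ≠ ⊤ := ENNReal.ofReal_ne_top
  -- radius is at most ecc of u
  have hRD : ecc G v₀ ≤ ecc G u := by
    rw [hcentral, NCG.radius]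
    exact iInf_le _ u
  have hRD' : ((ecc G v₀ : ℕ∞) : ℝ≥0∞) ≤ ((ecc G u : ℕ∞) : ℝ≥0∞) := by exact_mod_cast hRD
  have hecc'' : ((ecc G' u : ℕ∞) : ℝ≥0∞) ≤ 1 + ((ecc G v₀ : ℕ∞) : ℝ≥0∞) := by exact_mod_cast hecc'
  have hR' : ((ecc G v₀ : ℕ∞) : ℝ≥0∞) ≠ ⊤ := fun h => hR (ENat.toENNReal_strictMono.injective (h.trans ENat.toENNReal_top.symm))
  -- the equilibrium inequality
  have key : A * ((s u).card : ℝ≥0∞) + ecc G v₀ ≤ A * (t.card : ℝ≥0∞) + (1 + ecc G v₀) := by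
    calc A * ((s u).card : ℝ≥0∞) + ecc G v₀
        ≤ A * ((s u).card : ℝ≥0∞) + ecc G u := add_le_add le_rfl hRD'
    _ = cost α s u := by rw [cost]
    _ ≤ cost α s' u := hs u t
    _ = A * (t.card : ℝ≥0∞) + ecc G' u := by
        rw [cost, hs', Function.update_self]
    _ ≤ A * (t.card : ℝ≥0∞) + (1 + ecc G v₀) := add_le_add le_rfl hecc''
  -- derive the contradiction
  obtain ⟨m, hm⟩ : ∃ m, (s u).card = t.card + m := ⟨(s u).card - t.card, by omega⟩
  have hm1 : 1 ≤ m := by omega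
  rw [hm] at key
  have hmul : A * ((t.card + m : ℕ) : ℝ≥0∞) = A * (t.card : ℝ≥0∞) + A * (m : ℝ≥0∞) := by
    push_cast
    ring
  rw [hmul, add_assoc] at key
  have key2 : A * (m : ℝ≥0∞) + ecc G v₀ ≤ 1 + ecc G v₀ :=
    (ENNReal.add_le_add_iff_left (ENNReal.mul_ne_top hAtop (ENat.toENNReal_coe .. ▸ ENNReal.natCast_ne_top t.card))).mp key
  have key3 : A * (m : ℝ≥0∞) ≤ 1 := by
    rw [add_comm (A * (m : ℝ≥0∞)) _, add_comm (1 : ℝ≥0∞) _] at key2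
    exact (ENNReal.add_le_add_iff_left hR').mp key2
  have : A ≤ 1 := by
    calc A = A * 1 := (mul_one A).symm
    _ ≤ A * (m : ℝ≥0∞) := by
        refine mul_le_mul_right ?_ A
        exact_mod_cast hm1
    _ ≤ 1 := key3
  exact absurd hA1 (not_lt.mpr this)
end
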